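/- Let H = ⟨a_1, ..., a_n⟩ (n ≥ 3, minimally generated) and suppose there exists a pseudo-Frobenius number α of H with (n-1)α ∉ H. Then PF(H) = {α, 2α, ..., (n-1)α}; in particular the Frobenius number of H is (n-1)α and H has type n-1. -/

import Mathlib

/-- The numerical semigroup (as a subset of ℤ) generated by `a`. -/
def SgGen {n : ℕ} (a : Fin n → ℕ) : Set ℤ :=
  {x | ∃ c : Fin n → ℕ, x = ∑ i, (c i : ℤ) * a i}

/-- `α` is a pseudo-Frobenius number of `⟨a⟩`. -/
def IsPF {n : ℕ} (a : Fin n → ℕ) (α : ℤ) : Prop :=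
  α ∉ SgGen a ∧ ∀ i, α + a i ∈ SgGen a

/-- `a` minimally generates: no generator is a combination of the others. -/
def MinGen {n : ℕ} (a : Fin n → ℕ) : Prop :=
  ∀ i, ¬ ∃ c : Fin n → ℕ, c i = 0 ∧ (a i : ℤ) = ∑ j, (c j : ℤ) * a j
section Aux

variable {n : ℕ} {a : Fin n → ℕ}

lemma sg_nonneg {x : ℤ} (hx : x ∈ SgGen a) : 0 ≤ x := by
  obtain ⟨c, rfl⟩ := hx
  exact Finset.sum_nonneg fun i _ => by positivity

lemma sg_zero : (0 : ℤ) ∈ SgGen a := ⟨0, by simp⟩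

lemma sg_gen (i : Fin n) : ((a i : ℤ)) ∈ SgGen a := by
  refine ⟨fun j => if j = i then 1 else 0, ?_⟩
  rw [Finset.sum_eq_single i] <;> simp +contextual

lemma sg_add {x y : ℤ} (hx : x ∈ SgGen a) (hy : y ∈ SgGen a) : x + y ∈ SgGen a := by
  obtain ⟨c, rfl⟩ := hx
  obtain ⟨d, rfl⟩ := hy
  refine ⟨c + d, ?_⟩
  rw [Finset.sum_congr rfl (fun i _ => show ((((c + d) i : ℕ)) : ℤ) * a i
    = (c i : ℤ) * a i + (d i : ℤ) * a i by push_cast [Pi.add_apply]; ring), Finset.sum_add_distrib]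

lemma sg_extract {x : ℤ} (hx : x ∈ SgGen a) (hx0 : x ≠ 0) :
    ∃ i, x - a i ∈ SgGen a := by
  obtain ⟨c, rfl⟩ := hx
  have : ∃ i, c i ≠ 0 := by
    by_contra h
    push_neg at h
    exact hx0 (by simp [h])
  obtain ⟨i, hi⟩ := this
  refine ⟨i, Function.update c i (c i - 1), ?_⟩
  have e1 := (Finset.sum_erase_add Finset.univ
    (fun j => ((Function.update c i (c i - 1) j : ℕ) : ℤ) * a j) (Finset.mem_univ i)).symm
  have e2 := (Finset.sum_erase_add Finset.univ
    (fun j => ((c j : ℕ) : ℤ) * a j) (Finset.mem_univ i)).symm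
  have e3 : ∑ j ∈ Finset.univ.erase i, ((Function.update c i (c i - 1) j : ℕ) : ℤ) * a j
      = ∑ j ∈ Finset.univ.erase i, ((c j : ℕ) : ℤ) * a j := by
    refine Finset.sum_congr rfl fun j hj => ?_
    rw [Function.update_of_ne (Finset.ne_of_mem_erase hj)]
  have e4 : ((Function.update c i (c i - 1) i : ℕ) : ℤ) = (c i : ℤ) - 1 := by
    rw [Function.update_self]; omega
  simp only [e3, e4] at e1
  rw [e1, e2]; ring

lemma sg_ge_gen {x : ℤ} (hx : x ∈ SgGen a) (hx0 : x ≠ 0) : ∃ i, (a i : ℤ) ≤ x := by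
  obtain ⟨i, hi⟩ := sg_extract hx hx0
  exact ⟨i, by have := sg_nonneg hi; omega⟩

lemma sg_nsmul {x : ℤ} (hx : x ∈ SgGen a) (k : ℕ) : (k : ℤ) * x ∈ SgGen a := by
  induction k with
  | zero => simpa using sg_zero
  | succ m ih => push_cast; rw [add_mul, one_mul]; exact sg_add ih hx

lemma sg_sum_update (c : Fin n → ℕ) (i : Fin n) (v : ℕ) :
    ∑ j, ((Function.update c i v j : ℕ) : ℤ) * a j
      = ∑ j, (c j : ℤ) * a j - (c i : ℤ) * a i + (v : ℤ) * a i := by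
  have e1 := (Finset.sum_erase_add Finset.univ
    (fun j => ((Function.update c i v j : ℕ) : ℤ) * a j) (Finset.mem_univ i)).symm
  have e2 := (Finset.sum_erase_add Finset.univ
    (fun j => ((c j : ℕ) : ℤ) * a j) (Finset.mem_univ i)).symm
  have e3 : ∑ j ∈ Finset.univ.erase i, ((Function.update c i v j : ℕ) : ℤ) * a j
      = ∑ j ∈ Finset.univ.erase i, ((c j : ℕ) : ℤ) * a j := by
    refine Finset.sum_congr rfl fun j hj => ?_
    rw [Function.update_of_ne (Finset.ne_of_mem_erase hj)]
  simp only [e3, Function.update_self] at e1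
  rw [e1, e2]; ring

lemma sg_extract_at {c : Fin n → ℕ} {j : Fin n} (hc : c j ≠ 0) :
    (∑ i, (c i : ℤ) * a i) - a j ∈ SgGen a := by
  refine ⟨Function.update c j (c j - 1), ?_⟩
  rw [sg_sum_update]
  have : ((c j - 1 : ℕ) : ℤ) = (c j : ℤ) - 1 := by omega
  rw [this]; ring

lemma pf_pos (hn : 3 ≤ n) (ha : ∀ i, 0 < a i) (hmin : MinGen a)
    {γ : ℤ} (hγ : IsPF a γ) : 0 < γ := by
  have hγ0 : γ ≠ 0 := fun h => hγ.1 (h ▸ sg_zero)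
  by_contra hneg
  have hγneg : γ < 0 := by omega
  have hne : Nonempty (Fin n) := ⟨⟨0, by omega⟩⟩
  obtain ⟨i0, -, hi0⟩ := Finset.exists_min_image Finset.univ a (by
    exact Finset.univ_nonempty)
  have h0 : γ + a i0 ∈ SgGen a := hγ.2 i0
  have h00 : γ + (a i0 : ℤ) = 0 := by
    by_contra hne0
    obtain ⟨k, hk⟩ := sg_ge_gen h0 hne0
    have := hi0 k (Finset.mem_univ k)
    omega
  -- γ = - a i0
  obtain ⟨j, hjne⟩ := Fintype.exists_ne_of_one_lt_card (by simp; omega) i0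
  have hj2 : γ + a j ∈ SgGen a := hγ.2 j
  obtain ⟨c, hc⟩ := hj2
  have hcj : c j = 0 := by
    by_contra hcj
    have h3 : γ + (a j : ℤ) - a j ∈ SgGen a := hc ▸ sg_extract_at hcj
    have h4 : (γ : ℤ) ∈ SgGen a := by
      have : γ + (a j : ℤ) - a j = γ := by ring
      rwa [this] at h3
    exact hγ.1 h4
  refine hmin j ⟨Function.update c i0 (c i0 + 1), ?_, ?_⟩
  · rw [Function.update_of_ne hjne]; exact hcj
  · rw [sg_sum_update]
    push_cast
    linarith

lemma absorb {γ x : ℤ} (hγ : IsPF a γ) (hx : x ∈ SgGen a) (hx0 : x ≠ 0) :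
    γ + x ∈ SgGen a := by
  obtain ⟨i, hi⟩ := sg_extract hx hx0
  have := sg_add (hγ.2 i) hi
  have e : γ + (a i : ℤ) + (x - a i) = γ + x := by ring
  rwa [e] at this

lemma chain (hn : 3 ≤ n) (ha : ∀ i, 0 < a i) (hmin : MinGen a) {α : ℤ} (hα : IsPF a α)
    {γ : ℤ} (hγ : IsPF a γ) (hno : γ + α ∉ SgGen a) : IsPF a (γ + α) := by
  have hαpos := pf_pos hn ha hmin hα
  refine ⟨hno, fun i => ?_⟩
  have h1 : α + (a i : ℤ) ∈ SgGen a := hα.2 i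
  have h0 : α + (a i : ℤ) ≠ 0 := by
    have : (0:ℤ) < a i := by exact_mod_cast ha i
    omega
  have := absorb hγ h1 h0
  have e : γ + (α + (a i:ℤ)) = γ + α + a i := by ring
  rwa [e] at this

lemma mult_not_mem (hn : 3 ≤ n) (ha : ∀ i, 0 < a i) (hmin : MinGen a) {α : ℤ}
    (hα : IsPF a α) (hout : ((n : ℤ) - 1) * α ∉ SgGen a) :
    ∀ s : ℕ, 1 ≤ s → s ≤ n - 1 → ((s : ℤ) * α) ∉ SgGen a := by
  have hαpos := pf_pos hn ha hmin hα
  intro s h1 h2 hmem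
  have grow : ∀ t : ℕ, s ≤ t → ((t : ℤ) * α) ∈ SgGen a := by
    intro t ht
    induction t, ht using Nat.le_induction with
    | base => exact hmem
    | succ t ht ih =>
      have hne : ((t : ℤ) * α) ≠ 0 := by
        have : (1:ℤ) ≤ (t:ℤ) := by exact_mod_cast le_trans h1 ht
        nlinarith
      have := absorb hα ih hne
      have e : α + (t : ℤ) * α = ((t + 1 : ℕ) : ℤ) * α := by push_cast; ring
      rwa [e] at this
  have := grow (n - 1) h2
  have e : ((n - 1 : ℕ) : ℤ) = (n : ℤ) - 1 := by
    have : 1 ≤ n := by omega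
    push_cast [this]; ring
  rw [e] at this
  exact hout this

lemma mult_pf (hn : 3 ≤ n) (ha : ∀ i, 0 < a i) (hmin : MinGen a) {α : ℤ}
    (hα : IsPF a α) (hout : ((n : ℤ) - 1) * α ∉ SgGen a) :
    ∀ s : ℕ, 1 ≤ s → s ≤ n - 1 → IsPF a ((s : ℤ) * α) := by
  intro s h1 h2
  induction s, h1 using Nat.le_induction with
  | base => simpa using hα
  | succ s h1 ih =>
    have hs : s ≤ n - 1 := by omega
    have hpf := ih hs
    have hno : (s : ℤ) * α + α ∉ SgGen a := by
      have e : (s : ℤ) * α + α = ((s + 1 : ℕ) : ℤ) * α := by push_cast; ring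
      rw [e]
      exact mult_not_mem hn ha hmin hα hout (s+1) (by omega) h2
    have := chain hn ha hmin hα hpf hno
    have e : (s : ℤ) * α + α = ((s + 1 : ℕ) : ℤ) * α := by push_cast; ring
    rwa [e] at this

lemma sg_path {α : ℤ} {f : Fin n → Fin n}
    (hedge : ∀ i, α + (a i : ℤ) - a (f i) ∈ SgGen a) :
    ∀ (t : ℕ) (i : Fin n), (t : ℤ) * α + a i - a (f^[t] i) ∈ SgGen a := by
  intro t
  induction t with
  | zero =>
    intro i
    have e : ((0:ℕ) : ℤ) * α + a i - a (f^[0] i) = 0 := by simp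
    rw [e]; exact sg_zero
  | succ t ih =>
    intro i
    have h2 := hedge (f^[t] i)
    have := sg_add (ih i) h2
    have e : (t : ℤ) * α + a i - a (f^[t] i) + (α + a (f^[t] i) - a (f (f^[t] i)))
        = ((t+1 : ℕ) : ℤ) * α + a i - a (f^[t+1] i) := by
      rw [Function.iterate_succ_apply']
      push_cast; ring
    rwa [e] at this

lemma exists_cycle (hn : 3 ≤ n) (ha : ∀ i, 0 < a i) (hmin : MinGen a) {α : ℤ}
    (hα : IsPF a α) (hout : ((n : ℤ) - 1) * α ∉ SgGen a) :
    ∃ (f : Fin n → Fin n) (lam : Fin n → ℕ),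
      (∀ i, f i ≠ i) ∧ (∀ i, 1 ≤ lam i) ∧
      (∀ i, α + (a i : ℤ) = (lam i : ℤ) * a (f i)) ∧
      Function.Bijective f ∧ (∀ i k : Fin n, ∃ t, t < n ∧ f^[t] i = k) := by
  classical
  have hαpos := pf_pos hn ha hmin hα
  have hacast : ∀ i, (0:ℤ) < a i := fun i => by exact_mod_cast ha i
  -- edges
  have hedge : ∀ i : Fin n, ∃ k, k ≠ i ∧ α + (a i : ℤ) - a k ∈ SgGen a := by
    intro i
    have h1 : α + (a i : ℤ) ∈ SgGen a := hα.2 i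
    have h0 : α + (a i : ℤ) ≠ 0 := by have := hacast i; omega
    obtain ⟨k, hk⟩ := sg_extract h1 h0
    refine ⟨k, ?_, hk⟩
    rintro rfl
    apply hα.1
    have e : α + (a k : ℤ) - a k = α := by ring
    rwa [e] at hk
  choose f0 hf0ne hf0mem using hedge
  -- path sums
  have hpath := sg_path (a := a) hf0mem
  -- a periodic point
  have hnpos : 0 < n := by omega
  set z0 : Fin n := ⟨0, hnpos⟩ with hz0
  have key : ∃ p q : ℕ, p < q ∧ q ≤ n ∧ f0^[p] z0 = f0^[q] z0 := by
    obtain ⟨j, j', hne, heq⟩ := Fintype.exists_ne_map_eq_of_card_lt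
      (fun j : Fin (n+1) => f0^[(j : ℕ)] z0) (by simp)
    have hne' : (j : ℕ) ≠ (j' : ℕ) := fun h => hne (Fin.ext h)
    rcases lt_or_gt_of_ne hne' with h | h
    · exact ⟨j, j', h, by omega, heq⟩
    · exact ⟨j', j, h, by omega, heq.symm⟩
  obtain ⟨p, q, hpq, hqn, hper0⟩ := key
  set y : Fin n := f0^[p] z0 with hy
  have hper : f0^[q - p] y = y := by
    have h1 : f0^[q - p] y = f0^[q] z0 := by
      rw [hy, ← Function.iterate_add_apply]
      congr 1
      omega
    rw [h1]
    exact hper0.symm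
  -- minimal period
  have hex : ∃ d, 0 < d ∧ f0^[d] y = y := ⟨q - p, by omega, hper⟩
  obtain ⟨d, ⟨hdpos, hdper⟩, hdmin⟩ :
      ∃ d, (0 < d ∧ f0^[d] y = y) ∧ ∀ m, (0 < m ∧ f0^[m] y = y) → d ≤ m :=
    ⟨Nat.find hex, Nat.find_spec hex, fun m hm => Nat.find_le hm⟩
  -- orbit elements distinct
  have hdistinct : ∀ t t' : ℕ, t < t' → t' < d → f0^[t] y ≠ f0^[t'] y := by
    intro t t' htt' ht'd heq
    have h1 : f0^[d - t' + t] y = y := by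
      have e1 : f0^[d - t' + t'] y = y := by
        have e : d - t' + t' = d := by omega
        rw [e]; exact hdper
      calc f0^[d - t' + t] y = f0^[d - t'] (f0^[t] y) := Function.iterate_add_apply f0 _ t y
        _ = f0^[d - t'] (f0^[t'] y) := by rw [heq]
        _ = f0^[d - t' + t'] y := (Function.iterate_add_apply f0 _ t' y).symm
        _ = y := e1
    have h2 : 0 < d - t' + t ∧ d - t' + t < d := by omega
    exact absurd (hdmin _ ⟨h2.1, h1⟩) (by omega)
  have hinj : Function.Injective (fun t : Fin d => f0^[(t : ℕ)] y) := by
    intro t t' heq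
    by_contra hne
    have hne' : (t : ℕ) ≠ (t' : ℕ) := fun h => hne (Fin.ext h)
    rcases lt_or_gt_of_ne hne' with h | h
    · exact hdistinct _ _ h t'.isLt heq
    · exact hdistinct _ _ h t.isLt heq.symm
  have hdlen : d ≤ n := by
    have := Fintype.card_le_of_injective _ hinj
    simpa using this
  -- d • α ∈ SgGen
  have hdmem : ((d : ℤ) * α) ∈ SgGen a := by
    have := hpath d y
    rw [hdper] at this
    have e : (d : ℤ) * α + a y - a y = (d : ℤ) * α := by ring
    rwa [e] at this
  have hdn : d = n := by
    by_contra hne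
    exact mult_not_mem hn ha hmin hα hout d hdpos (by omega) hdmem
  -- orbit surjective
  subst hdn
  have hbij0 : Function.Bijective (fun t : Fin d => f0^[(t : ℕ)] y) :=
    (Finite.injective_iff_bijective).mp hinj
  have horb : ∀ k : Fin d, ∃ t, t < d ∧ f0^[t] y = k := by
    intro k
    obtain ⟨t, ht⟩ := hbij0.2 k
    exact ⟨(t : ℕ), t.isLt, ht⟩
  -- global periodicity
  have hnper : ∀ i : Fin d, f0^[d] i = i := by
    intro i
    obtain ⟨t, htd, ht⟩ := horb i
    rw [← ht, ← Function.iterate_add_apply, add_comm, Function.iterate_add_apply, hdper]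
  -- distances
  have hdist : ∀ i k : Fin d, ∃ t, t < d ∧ f0^[t] i = k := by
    intro i k
    obtain ⟨s, hsd, hs⟩ := horb i
    obtain ⟨u, hud, hu⟩ := horb k
    rcases le_or_gt s u with h | h
    · refine ⟨u - s, by omega, ?_⟩
      rw [← hs, ← Function.iterate_add_apply]
      have e : u - s + s = u := by omega
      rw [e, hu]
    · refine ⟨u + d - s, by omega, ?_⟩
      rw [← hs, ← Function.iterate_add_apply]
      have e : u + d - s + s = u + d := by omega
      rw [e, Function.iterate_add_apply, hnper, hu]
  -- injectivity of f0
  have hf0inj : Function.Injective f0 := by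
    intro i j hij
    have e1 : f0^[d-1] (f0 i) = i := by
      have h2 : f0^[d - 1 + 1] i = i := by
        have e : d - 1 + 1 = d := by omega
        rw [e]; exact hnper i
      rwa [Function.iterate_succ_apply] at h2
    have e2 : f0^[d-1] (f0 j) = j := by
      have h2 : f0^[d - 1 + 1] j = j := by
        have e : d - 1 + 1 = d := by omega
        rw [e]; exact hnper j
      rwa [Function.iterate_succ_apply] at h2
    rw [← e1, ← e2, hij]
  have hf0bij : Function.Bijective f0 := (Finite.injective_iff_bijective).mp hf0inj
  -- uniqueness of edges
  have huniq : ∀ i k : Fin d, k ≠ i → α + (a i : ℤ) - a k ∈ SgGen a → k = f0 i := by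
    intro i k hki hmem
    obtain ⟨t, htd, ht⟩ := hdist k i
    have ht0 : t ≠ 0 := by
      rintro rfl
      exact hki ht
    have hsum := sg_add hmem (hpath t k)
    rw [ht] at hsum
    have e : α + (a i : ℤ) - a k + ((t : ℤ) * α + a k - a i) = ((t+1 : ℕ) : ℤ) * α := by
      push_cast; ring
    rw [e] at hsum
    have htn : t + 1 = d := by
      by_contra hne
      exact mult_not_mem hn ha hmin hα hout (t+1) (by omega) (by omega) hsum
    have : f0^[t+1] k = f0 i := by
      rw [Function.iterate_succ_apply', ht]
    rw [htn, hnper k] at this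
    exact this
  -- lambda structure
  have hlam : ∀ i : Fin d, ∃ L : ℕ, 1 ≤ L ∧ α + (a i : ℤ) = (L : ℤ) * a (f0 i) := by
    intro i
    obtain ⟨c, hc⟩ := hα.2 i
    have hzero : ∀ k, k ≠ f0 i → c k = 0 := by
      intro k hk
      by_contra hck
      have hmem : α + (a i : ℤ) - a k ∈ SgGen a := hc ▸ sg_extract_at hck
      have hki : k ≠ i := by
        rintro rfl
        apply hα.1
        have e : α + (a k : ℤ) - a k = α := by ring
        rwa [e] at hmem
      exact hk (huniq i k hki hmem)
    have hsum : α + (a i : ℤ) = (c (f0 i) : ℤ) * a (f0 i) := by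
      rw [hc]
      rw [Finset.sum_eq_single (f0 i)]
      · intro k _ hk
        rw [hzero k hk]; simp
      · intro h
        exact absurd (Finset.mem_univ _) h
    refine ⟨c (f0 i), ?_, hsum⟩
    by_contra hL
    have : c (f0 i) = 0 := by omega
    rw [this] at hsum
    have := hacast i
    simp at hsum
    omega
  choose lam hlam1 hlam2 using hlam
  exact ⟨f0, lam, hf0ne, hlam1, hlam2, hf0bij, hdist⟩

lemma sg_red (ha : ∀ i, 0 < a i) {α : ℤ} (hαpos : 0 < α)
    {f : Fin n → Fin n} {lam : Fin n → ℕ} (hfne : ∀ i, f i ≠ i)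
    (hlam2 : ∀ i, α + (a i : ℤ) = (lam i : ℤ) * a (f i)) :
    ∀ x ∈ SgGen a, ∃ (b : Fin n → ℕ) (k : ℕ),
      x = (∑ m, (b m : ℤ) * a m) + k * α ∧ ∀ j, b (f j) < lam j := by
  have main : ∀ N : ℕ, ∀ x : ℤ, x ∈ SgGen a → x.toNat = N →
      ∃ (b : Fin n → ℕ) (k : ℕ),
        x = (∑ m, (b m : ℤ) * a m) + k * α ∧ ∀ j, b (f j) < lam j := by
    intro N
    induction N using Nat.strong_induction_on with
    | _ N IH =>
      rintro x ⟨c, rfl⟩ hN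
      by_cases hbox : ∀ j, c (f j) < lam j
      · exact ⟨c, 0, by simp, hbox⟩
      · push_neg at hbox
        obtain ⟨j, hj⟩ := hbox
        set u := Function.update c (f j) (c (f j) - lam j) with hu
        set c' := Function.update u j (u j + 1) with hc'
        have huj : u j = c j := by
          rw [hu, Function.update_of_ne (hfne j).symm]
        have hval : (∑ m, (c' m : ℤ) * a m)
            = (∑ m, (c m : ℤ) * a m) - α := by
          rw [hc', sg_sum_update, hu, sg_sum_update]
          rw [Function.update_of_ne (hfne j).symm]
          have e1 : ((c (f j) - lam j : ℕ) : ℤ) = (c (f j) : ℤ) - lam j := by omega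
          have e2 : ((c j + 1 : ℕ) : ℤ) = (c j : ℤ) + 1 := by omega
          rw [e1, e2]
          have e3 := hlam2 j
          push_cast
          linarith
        have hmem' : (∑ m, (c m : ℤ) * a m) - α ∈ SgGen a := ⟨c', hval.symm⟩
        have hge : (0:ℤ) ≤ (∑ m, (c m : ℤ) * a m) - α := sg_nonneg hmem'
        have hlt : ((∑ m, (c m : ℤ) * a m) - α).toNat < N := by
          have h0 : (0:ℤ) ≤ ∑ m, (c m : ℤ) * a m := by linarith
          omega
        obtain ⟨b, k, hb, hbox'⟩ := IH _ hlt _ hmem' rfl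
        refine ⟨b, k + 1, ?_, hbox'⟩
        push_cast
        push_cast at hb
        linarith
  intro x hx
  exact main x.toNat x hx rfl

lemma exists_T {α : ℤ} {f : Fin n → Fin n} {lam : Fin n → ℕ}
    (hlam1 : ∀ i, 1 ≤ lam i)
    (hlam2 : ∀ i, α + (a i : ℤ) = (lam i : ℤ) * a (f i))
    (hfbij : Function.Bijective f) :
    ∃ T : Fin n → ℕ,
      (∀ b : Fin n → ℕ, (∀ j, b (f j) < lam j) → ∀ m, b m ≤ T m) ∧
      (∑ m, (T m : ℤ) * a m) = (n : ℤ) * α := by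
  classical
  set e := Equiv.ofBijective f hfbij with he
  refine ⟨fun m => lam (e.symm m) - 1, ?_, ?_⟩
  · intro b hb m
    have h1 : f (e.symm m) = m := e.apply_symm_apply m
    have := hb (e.symm m)
    rw [h1] at this
    show b m ≤ lam (e.symm m) - 1
    omega
  · have hsum : ∑ m, ((lam (e.symm m) - 1 : ℕ) : ℤ) * a m
        = ∑ j, ((lam (e.symm (e j)) - 1 : ℕ) : ℤ) * a (e j) :=
      (Equiv.sum_comp e (fun m => ((lam (e.symm m) - 1 : ℕ) : ℤ) * a m)).symm
    rw [hsum]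
    have hterm : ∀ j : Fin n, ((lam (e.symm (e j)) - 1 : ℕ) : ℤ) * a (e j)
        = ((lam j : ℤ) * a (f j) - a (f j)) := by
      intro j
      rw [e.symm_apply_apply]
      have h1 := hlam1 j
      have e1 : ((lam j - 1 : ℕ) : ℤ) = (lam j : ℤ) - 1 := by omega
      have : e j = f j := rfl
      rw [this, e1]
      ring
    rw [Finset.sum_congr rfl (fun j _ => hterm j)]
    have h2 : ∀ j : Fin n, (lam j : ℤ) * a (f j) - a (f j) = α + a j - a (f j) := by
      intro j
      rw [← hlam2 j]
    rw [Finset.sum_congr rfl (fun j _ => h2 j)]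
    have h3 : ∑ j : Fin n, (α + (a j : ℤ) - a (f j))
        = (n : ℤ) * α + (∑ j, (a j : ℤ)) - (∑ j, (a (f j) : ℤ)) := by
      rw [Finset.sum_sub_distrib, Finset.sum_add_distrib]
      simp [Finset.card_univ, mul_comm]
    rw [h3]
    have h4 : (∑ j, (a (f j) : ℤ)) = ∑ j, (a j : ℤ) := by
      have : e = Equiv.ofBijective f hfbij := he
      exact Equiv.sum_comp (Equiv.ofBijective f hfbij) (fun m => (a m : ℤ))
    rw [h4]
    ring

lemma pf_forward (hn : 3 ≤ n) (ha : ∀ i, 0 < a i) (hmin : MinGen a) {α : ℤ}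
    (hα : IsPF a α) (hout : ((n : ℤ) - 1) * α ∉ SgGen a)
    {γ : ℤ} (hγ : IsPF a γ) :
    ∃ r : ℕ, 1 ≤ r ∧ r ≤ n - 1 ∧ γ = (r : ℤ) * α := by
  classical
  have hαpos := pf_pos hn ha hmin hα
  have hγpos := pf_pos hn ha hmin hγ
  have hacast : ∀ i, (0:ℤ) < a i := fun i => by exact_mod_cast ha i
  obtain ⟨f, lam, hfne, hlam1, hlam2, hfbij, hdist⟩ := exists_cycle hn ha hmin hα hout
  -- edges of f as members
  have hedge : ∀ i, α + (a i : ℤ) - a (f i) ∈ SgGen a := by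
    intro i
    have h1 := sg_nsmul (a := a) (sg_gen (f i)) (lam i - 1)
    have e : ((lam i - 1 : ℕ) : ℤ) * a (f i) = α + a i - a (f i) := by
      have h2 := hlam2 i
      have h3 := hlam1 i
      have e1 : ((lam i - 1 : ℕ) : ℤ) = (lam i : ℤ) - 1 := by omega
      rw [e1]; linarith
    rwa [e] at h1
  obtain ⟨T, hTbound, hTval⟩ := exists_T hlam1 hlam2 hfbij
  have hnmem : ((n : ℕ) : ℤ) * α ∈ SgGen a := ⟨T, by rw [hTval]⟩
  have hmult_ge : ∀ k : ℕ, n ≤ k → ((k : ℤ) * α) ∈ SgGen a := by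
    intro k hk
    induction k, hk using Nat.le_induction with
    | base => exact_mod_cast hnmem
    | succ t ht ih =>
      have hne : ((t : ℤ) * α) ≠ 0 := by
        have : (1:ℤ) ≤ (t:ℤ) := by exact_mod_cast le_trans (by omega : 1 ≤ n) ht
        nlinarith
      have := absorb hα ih hne
      have e : α + (t : ℤ) * α = ((t + 1 : ℕ) : ℤ) * α := by push_cast; ring
      rwa [e] at this
  -- crux : C'
  have crux : ∀ δ : ℤ, IsPF a δ → δ + α ∈ SgGen a → δ = ((n : ℤ) - 1) * α := by
    intro δ hδ hmem
    have hδpos := pf_pos hn ha hmin hδ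
    obtain ⟨b, k, hbk, hbox⟩ := sg_red ha hαpos hfne hlam2 _ hmem
    by_cases hb0 : ∀ m, b m = 0
    · -- δ + α = k α
      have hsum0 : (∑ m, (b m : ℤ) * a m) = 0 := by
        apply Finset.sum_eq_zero
        intro m _
        rw [hb0 m]; simp
      rw [hsum0, zero_add] at hbk
      have hk0 : k ≠ 0 := by
        rintro rfl
        simp at hbk
        omega
      have hkmem : ((k : ℤ) * α) ∈ SgGen a := hbk ▸ hmem
      have hkn : n ≤ k := by
        by_contra hlt
        exact mult_not_mem hn ha hmin hα hout k (by omega) (by omega) hkmem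
      have hknn : k ≤ n := by
        by_contra hgt
        apply hδ.1
        have h1 := hmult_ge (k - 1) (by omega)
        have e : ((k - 1 : ℕ) : ℤ) * α = δ := by
          have e2 : ((k - 1 : ℕ) : ℤ) = (k : ℤ) - 1 := by omega
          rw [e2]; linarith
        rwa [e] at h1
      have : k = n := le_antisymm hknn hkn
      subst this
      push_cast at hbk ⊢
      linarith
    · push_neg at hb0
      obtain ⟨m0, hm0⟩ := hb0
      have hbval_pos : (0:ℤ) < ∑ m, (b m : ℤ) * a m := by
        have h1 : (b m0 : ℤ) * a m0 ≤ ∑ m, (b m : ℤ) * a m :=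
          Finset.single_le_sum (f := fun m => (b m : ℤ) * a m) (fun m _ => by positivity) (Finset.mem_univ m0)
        have h2 : (1:ℤ) ≤ b m0 := by exact_mod_cast Nat.one_le_iff_ne_zero.mpr hm0
        nlinarith [hacast m0]
      rcases Nat.eq_zero_or_pos k with hk0 | hkpos
      · -- δ + α = b ⬝ a
        subst hk0
        simp only [Nat.cast_zero, zero_mul, add_zero] at hbk
        by_cases hbT : ∀ m, b m = T m
        · have : (∑ m, (b m : ℤ) * a m) = (n : ℤ) * α := by
            rw [← hTval]
            exact Finset.sum_congr rfl fun m _ => by rw [hbT m]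
          rw [this] at hbk
          linarith
        · push_neg at hbT
          obtain ⟨m1, hm1⟩ := hbT
          have hble : ∀ m, b m ≤ T m := hTbound b hbox
          have hm1lt : b m1 < T m1 := lt_of_le_of_ne (hble m1) hm1
          have hdmem : (∑ m, ((T m - b m : ℕ) : ℤ) * a m) ∈ SgGen a :=
            ⟨fun m => T m - b m, rfl⟩
          have hdval : (∑ m, ((T m - b m : ℕ) : ℤ) * a m)
              = (n : ℤ) * α - (∑ m, (b m : ℤ) * a m) := by
            rw [← hTval, ← Finset.sum_sub_distrib]
            refine Finset.sum_congr rfl fun m _ => ?_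
            have : ((T m - b m : ℕ) : ℤ) = (T m : ℤ) - b m := by
              have := hble m; omega
            rw [this]; ring
          have hdpos : (0:ℤ) < (∑ m, ((T m - b m : ℕ) : ℤ) * a m) := by
            have h1 : ((T m1 - b m1 : ℕ) : ℤ) * a m1 ≤ ∑ m, ((T m - b m : ℕ) : ℤ) * a m :=
              Finset.single_le_sum (f := fun m => ((T m - b m : ℕ) : ℤ) * a m) (fun m _ => by positivity) (Finset.mem_univ m1)
            have h2 : (1:ℤ) ≤ ((T m1 - b m1 : ℕ) : ℤ) := by
              have : 1 ≤ T m1 - b m1 := by omega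
              exact_mod_cast this
            nlinarith [hacast m1]
          have habs := absorb hδ hdmem (by omega)
          rw [hdval] at habs
          have e : δ + ((n : ℤ) * α - (∑ m, (b m : ℤ) * a m)) = ((n : ℤ) - 1) * α := by
            rw [← hbk]; ring
          rw [e] at habs
          exact absurd habs hout
      · -- k ≥ 1 : δ ∈ SgGen, contradiction
        exfalso
        apply hδ.1
        have hbmem : (∑ m, (b m : ℤ) * a m) ∈ SgGen a := ⟨b, rfl⟩
        have hadd : ∀ t : ℕ, (∑ m, (b m : ℤ) * a m) + (t : ℤ) * α ∈ SgGen a := by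
          intro t
          induction t with
          | zero => simpa using hbmem
          | succ t ih =>
            have hne : (∑ m, (b m : ℤ) * a m) + (t : ℤ) * α ≠ 0 := by
              have ht : (0:ℤ) ≤ (t : ℤ) * α := by positivity
              omega
            have := absorb hα ih hne
            have e : α + ((∑ m, (b m : ℤ) * a m) + (t : ℤ) * α)
                = (∑ m, (b m : ℤ) * a m) + ((t + 1 : ℕ) : ℤ) * α := by push_cast; ring
            rwa [e] at this
        have h1 := hadd (k - 1)
        have e : (∑ m, (b m : ℤ) * a m) + ((k - 1 : ℕ) : ℤ) * α = δ := by
          have e2 : ((k - 1 : ℕ) : ℤ) = (k : ℤ) - 1 := by omega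
          rw [e2]
          have : δ + α = (∑ m, (b m : ℤ) * a m) + (k:ℤ) * α := hbk
          linarith
        rwa [e] at h1
  -- find minimal k with γ + k α ∈ SgGen
  have hk_ex : ∃ t : ℕ, t + 1 ≤ n - 1 ∧ γ + ((t + 1 : ℕ) : ℤ) * α ∈ SgGen a := by
    have i0 : Fin n := ⟨0, by omega⟩
    have h1 : γ + (a i0 : ℤ) ∈ SgGen a := hγ.2 i0
    have h0 : γ + (a i0 : ℤ) ≠ 0 := by have := hacast i0; omega
    obtain ⟨kg, hkg⟩ := sg_extract h1 h0
    have hkgne : kg ≠ i0 := by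
      rintro rfl
      apply hγ.1
      have e : γ + (a kg : ℤ) - a kg = γ := by ring
      rwa [e] at hkg
    obtain ⟨t, htn, ht⟩ := hdist kg i0
    have ht0 : t ≠ 0 := by rintro rfl; exact hkgne ht
    have hsum := sg_add hkg (sg_path hedge t kg)
    rw [ht] at hsum
    have e : γ + (a i0 : ℤ) - a kg + ((t : ℤ) * α + a kg - a i0)
        = γ + ((t - 1 + 1 : ℕ) : ℤ) * α := by
      have : ((t - 1 + 1 : ℕ) : ℤ) = (t : ℤ) := by omega
      rw [this]; ring
    rw [e] at hsum
    exact ⟨t - 1, by omega, hsum⟩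
  have hP : ∃ t : ℕ, γ + ((t + 1 : ℕ) : ℤ) * α ∈ SgGen a := by
    obtain ⟨t, _, ht⟩ := hk_ex
    exact ⟨t, ht⟩
  set m := Nat.find hP with hm
  have hmspec : γ + ((m + 1 : ℕ) : ℤ) * α ∈ SgGen a := Nat.find_spec hP
  have hmle : m + 1 ≤ n - 1 := by
    obtain ⟨t, htle, ht⟩ := hk_ex
    have := Nat.find_min' hP ht
    omega
  -- chain up to m
  have hchain : ∀ j : ℕ, j ≤ m → IsPF a (γ + (j : ℤ) * α) := by
    intro j hj
    induction j with
    | zero => simpa using hγ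
    | succ j ih =>
      have hjm : j ≤ m := by omega
      have hpfj := ih hjm
      have hno : γ + (j : ℤ) * α + α ∉ SgGen a := by
        intro hmem
        have : γ + ((j + 1 : ℕ) : ℤ) * α ∈ SgGen a := by
          have e : γ + ((j + 1 : ℕ) : ℤ) * α = γ + (j : ℤ) * α + α := by push_cast; ring
          rwa [e]
        exact Nat.find_min hP (by omega : j < m) this
      have := chain hn ha hmin hα hpfj hno
      have e : γ + (j : ℤ) * α + α = γ + ((j + 1 : ℕ) : ℤ) * α := by push_cast; ring
      rwa [e] at this
  have hδpf := hchain m le_rfl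
  have hδmem : (γ + (m : ℤ) * α) + α ∈ SgGen a := by
    have e : (γ + (m : ℤ) * α) + α = γ + ((m + 1 : ℕ) : ℤ) * α := by push_cast; ring
    rw [e]; exact hmspec
  have hfin := crux _ hδpf hδmem
  refine ⟨n - 1 - m, by omega, by omega, ?_⟩
  have e : ((n - 1 - m : ℕ) : ℤ) = (n : ℤ) - 1 - m := by
    have h1 : m + 1 ≤ n - 1 := hmle
    have h2 : 3 ≤ n := hn
    omega
  rw [e]
  linarith

lemma bezout : ∀ s : Finset (Fin n), ∃ z : Fin n → ℤ, ∑ i ∈ s, z i * a i = ((s.gcd a : ℕ) : ℤ) := by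
  classical
  intro s
  induction s using Finset.induction_on with
  | empty => exact ⟨0, by simp⟩
  | insert i s hi ih =>
    obtain ⟨z, hz⟩ := ih
    set G : ℕ := s.gcd a with hG
    set A := Int.gcdA (a i) G with hA
    set B := Int.gcdB (a i) G with hB
    refine ⟨fun m => if m = i then A else B * z m, ?_⟩
    rw [Finset.sum_insert hi]
    have h1 : ∀ m ∈ s, (if m = i then A else B * z m) * a m = B * (z m * a m) := by
      intro m hm
      rw [if_neg (ne_of_mem_of_not_mem hm hi)]
      ring
    rw [Finset.sum_congr rfl h1, ← Finset.mul_sum, hz]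
    have hfi : (fun m => if m = i then A else B * z m) i = A := by simp
    rw [hfi]
    have h2 : (insert i s).gcd a = Nat.gcd (a i) G := by
      rw [Finset.gcd_insert]
      rfl
    rw [h2]
    have h3 := Int.gcd_eq_gcd_ab ((a i : ℤ)) ((G : ℤ))
    have h4 : Int.gcd ((a i : ℤ)) ((G : ℤ)) = Nat.gcd (a i) G := by
      exact Int.gcd_natCast_natCast _ _
    rw [h4] at h3
    rw [h3, ← hA, ← hB]
    ring

lemma sg_bound (hgcd : Finset.univ.gcd a = 1) :
    ∃ N : ℤ, ∀ x : ℤ, N ≤ x → x ∈ SgGen a := by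
  obtain ⟨z, hz⟩ := bezout (a := a) Finset.univ
  rw [hgcd] at hz
  set u : ℤ := ∑ i, ((z i).toNat : ℤ) * a i with hu
  set v : ℤ := ∑ i, ((-z i).toNat : ℤ) * a i with hv
  have humem : u ∈ SgGen a := ⟨fun i => (z i).toNat, rfl⟩
  have hvmem : v ∈ SgGen a := ⟨fun i => (-z i).toNat, rfl⟩
  have huv : u - v = 1 := by
    rw [hu, hv, ← Finset.sum_sub_distrib]
    have h1 : ∀ i : Fin n, ((z i).toNat : ℤ) * a i - ((-z i).toNat : ℤ) * a i
        = z i * a i := by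
      intro i
      have e : ((z i).toNat : ℤ) - ((-z i).toNat : ℤ) = z i := by omega
      nlinarith [e]
    rw [Finset.sum_congr rfl (fun i _ => h1 i), hz]
    norm_num
  have hv0 : 0 ≤ v := sg_nonneg hvmem
  refine ⟨v * v, fun x hx => ?_⟩
  rcases eq_or_lt_of_le hv0 with hveq | hvpos
  · -- v = 0, u = 1
    have hu1 : u = 1 := by omega
    have hx0 : 0 ≤ x := by nlinarith
    have := sg_nsmul humem x.toNat
    have e : (x.toNat : ℤ) * u = x := by
      rw [hu1]; omega
    rwa [e] at this
  · set q := x / v with hq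
    set r := x % v with hr
    have hr0 : 0 ≤ r := Int.emod_nonneg x (by omega)
    have hrv : r < v := Int.emod_lt_of_pos x hvpos
    have hqr : v * q + r = x := Int.mul_ediv_add_emod x v
    have hqv : v ≤ q := by
      rw [hq, Int.le_ediv_iff_mul_le hvpos]
      nlinarith
    have hmem := sg_add (sg_nsmul hvmem ((q - r).toNat)) (sg_nsmul humem (r.toNat))
    have e : ((q - r).toNat : ℤ) * v + (r.toNat : ℤ) * u = x := by
      have e1 : ((q - r).toNat : ℤ) = q - r := by omega
      have e2 : ((r.toNat) : ℤ) = r := by omega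
      rw [e1, e2]
      have e3 : u = v + 1 := by omega
      rw [e3]
      nlinarith
    rwa [e] at hmem

end Aux

theorem stmt15 {n : ℕ} (hn : 3 ≤ n) (a : Fin n → ℕ) (ha : ∀ i, 0 < a i)
    (hgcd : Finset.univ.gcd a = 1) (hmin : MinGen a)
    (α : ℤ) (hα : IsPF a α) (hout : ((n : ℤ) - 1) * α ∉ SgGen a) :
    {γ : ℤ | IsPF a γ} = {γ : ℤ | ∃ r : ℕ, 1 ≤ r ∧ r ≤ n - 1 ∧ γ = (r : ℤ) * α} ∧
    IsGreatest {m : ℤ | m ∉ SgGen a} (((n : ℤ) - 1) * α) ∧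
    {γ : ℤ | IsPF a γ}.ncard = n - 1 := by
  classical
  have hαpos := pf_pos hn ha hmin hα
  have hacast : ∀ i, (0:ℤ) < a i := fun i => by exact_mod_cast ha i
  have hseteq : {γ : ℤ | IsPF a γ}
      = {γ : ℤ | ∃ r : ℕ, 1 ≤ r ∧ r ≤ n - 1 ∧ γ = (r : ℤ) * α} := by
    ext γ
    simp only [Set.mem_setOf_eq]
    constructor
    · exact fun hγ => pf_forward hn ha hmin hα hout hγ
    · rintro ⟨r, h1, h2, rfl⟩
      exact mult_pf hn ha hmin hα hout r h1 h2
  refine ⟨hseteq, ⟨hout, ?_⟩, ?_⟩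
  · -- upper bound of gaps
    intro x hx
    obtain ⟨N, hN⟩ := sg_bound (a := a) hgcd
    have hbdd : ∃ b : ℤ, ∀ z : ℤ, (x ≤ z ∧ z ∉ SgGen a) → z ≤ b := by
      refine ⟨N, fun z hz => ?_⟩
      by_contra h
      exact hz.2 (hN z (by omega))
    have hinh : ∃ z : ℤ, x ≤ z ∧ z ∉ SgGen a := ⟨x, le_rfl, hx⟩
    obtain ⟨g, ⟨hgx, hgmem⟩, hgmax⟩ := Int.exists_greatest_of_bdd
      (P := fun z => x ≤ z ∧ z ∉ SgGen a) hbdd hinh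
    have hgpf : IsPF a g := by
      refine ⟨hgmem, fun i => ?_⟩
      by_contra hmem
      have h1 : g + (a i : ℤ) ≤ g := by
        refine hgmax _ ⟨?_, hmem⟩
        have := hacast i
        omega
      have := hacast i
      omega
    obtain ⟨r, h1, h2, hg⟩ := pf_forward hn ha hmin hα hout hgpf
    have hrle : (r : ℤ) ≤ (n : ℤ) - 1 := by
      have : (r : ℤ) ≤ ((n - 1 : ℕ) : ℤ) := by exact_mod_cast h2
      omega
    have : g ≤ ((n : ℤ) - 1) * α := by
      rw [hg]
      exact mul_le_mul_of_nonneg_right hrle (le_of_lt hαpos)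
    omega
  · rw [hseteq]
    have himg : {γ : ℤ | ∃ r : ℕ, 1 ≤ r ∧ r ≤ n - 1 ∧ γ = (r : ℤ) * α}
        = (fun r : ℕ => (r : ℤ) * α) '' (Set.Icc 1 (n-1)) := by
      ext γ
      simp only [Set.mem_setOf_eq, Set.mem_image, Set.mem_Icc]
      constructor
      · rintro ⟨r, h1, h2, rfl⟩; exact ⟨r, ⟨h1, h2⟩, rfl⟩
      · rintro ⟨r, ⟨h1, h2⟩, rfl⟩; exact ⟨r, h1, h2, rfl⟩
    rw [himg]
    rw [Set.ncard_image_of_injOn (by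
      intro r _ s _ h
      have hα0 : α ≠ 0 := ne_of_gt hαpos
      have : (r : ℤ) = s := mul_right_cancel₀ hα0 h
      exact_mod_cast this)]
    rw [show (Set.Icc 1 (n-1) : Set ℕ) = ↑(Finset.Icc 1 (n-1)) from (Finset.coe_Icc 1 (n-1)).symm]
    rw [Set.ncard_coe_finset, Nat.card_Icc]
    omega
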